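/- (Mann's Theorem) Suppose a_1ω_1 + a_2ω_2 + ··· + a_kω_k = 0 where a_i ∈ ℚ are all nonzero, each ω_i is a complex root of unity, and no proper nonempty subsum Σ_{i∈I} a_iω_i vanishes for any nonempty proper subset I of {1,...,k}. Then for every i, j, (ω_i/ω_j)^{Θ(k)} = 1, where Θ(k) is the product of all primes p ≤ k. -/

import Mathlib

set_option maxHeartbeats 1000000

open IntermediateField Polynomial Finset

noncomputable def mannK (p : ℕ) (ζ : ℂ) : IntermediateField ℚ ℂ :=
  IntermediateField.adjoin ℚ {ζ ^ p}

lemma mannK_mem (p : ℕ) (ζ x : ℂ) (h : ∃ t : ℕ, (ζ ^ p) ^ t = x) : x ∈ mannK p ζ := by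
  obtain ⟨t, rfl⟩ := h
  exact pow_mem (IntermediateField.mem_adjoin_simple_self ℚ (ζ ^ p)) t

lemma mann_deg (p n : ℕ) (hp : p.Prime) (hn : 0 < n) (hpn : p ∣ n)
    (ζ : ℂ) (hζ : IsPrimitiveRoot ζ n) :
    (minpoly (mannK p ζ) (ζ ^ (ordCompl[p] n))).natDegree * (n / p).totient
      = n.totient := by
  set m : ℕ := ordCompl[p] n with hm
  set θ : ℂ := ζ ^ m with hθdef
  set K : IntermediateField ℚ ℂ := mannK p ζ with hK
  have hnp : 0 < n / p := Nat.div_pos (Nat.le_of_dvd hn hpn) hp.pos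
  have hζint : IsIntegral ℚ ζ := (hζ.isIntegral hn).tower_top
  have hθint : IsIntegral K θ := (hζint.pow m).tower_top
  have hζp : IsPrimitiveRoot (ζ ^ p) (n / p) :=
    hζ.pow hn (Nat.mul_div_cancel' hpn).symm
  have hfinL : Module.finrank ℚ ℚ⟮ζ⟯ = n.totient := by
    rw [IntermediateField.adjoin.finrank hζint, ← cyclotomic_eq_minpoly_rat hζ hn,
      natDegree_cyclotomic]
  have hfinK : Module.finrank ℚ K = (n / p).totient := by
    rw [hK, mannK, IntermediateField.adjoin.finrank (hζint.pow p),
      ← cyclotomic_eq_minpoly_rat hζp hnp, natDegree_cyclotomic]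
  -- restrictScalars equality
  have hco : Nat.Coprime p m := Nat.coprime_ordCompl hp hn.ne'
  have hζ0 : ζ ≠ 0 := hζ.ne_zero hn.ne'
  have hres : (IntermediateField.adjoin K {θ}).restrictScalars ℚ = ℚ⟮ζ⟯ := by
    rw [hK, mannK]
    refine (adjoin_adjoin_left (F := ℚ) (S := {ζ ^ p}) (T := {θ})).trans ?_
    apply le_antisymm
    · rw [adjoin_le_iff]
      rintro x (rfl | rfl)
      · exact pow_mem (mem_adjoin_simple_self ℚ ζ) p
      · exact pow_mem (mem_adjoin_simple_self ℚ ζ) m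
    · rw [adjoin_le_iff, Set.singleton_subset_iff]
      obtain ⟨u, v, huv⟩ : IsCoprime (p : ℤ) (m : ℤ) := Nat.isCoprime_iff_coprime.mpr hco
      have hzeta : ζ = (ζ ^ p) ^ u * (ζ ^ m) ^ v := by
        rw [← zpow_natCast ζ p, ← zpow_natCast ζ m, ← zpow_mul, ← zpow_mul,
          ← zpow_add₀ hζ0]
        rw [show (p : ℤ) * u + (m : ℤ) * v = 1 by linarith [huv]]
        simp
      have h1 : (ζ ^ p) ∈ adjoin ℚ ({ζ ^ p} ∪ {θ} : Set ℂ) :=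
        subset_adjoin ℚ _ (Or.inl rfl)
      have h2 : θ ∈ adjoin ℚ ({ζ ^ p} ∪ {θ} : Set ℂ) :=
        subset_adjoin ℚ _ (Or.inr rfl)
      have h3 := mul_mem (zpow_mem h1 u) (zpow_mem h2 v)
      rwa [← hzeta] at h3
  haveI : FiniteDimensional ℚ K := by
    rw [hK, mannK]; exact IntermediateField.adjoin.finiteDimensional (hζint.pow p)
  haveI : FiniteDimensional K (IntermediateField.adjoin K {θ}) :=
    IntermediateField.adjoin.finiteDimensional hθint
  have htower := Module.finrank_mul_finrank ℚ K (IntermediateField.adjoin K {θ})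
  have hfr : Module.finrank ℚ (IntermediateField.adjoin K {θ}) = n.totient := by
    rw [← hfinL, ← hres]; rfl
  have hadj : Module.finrank K (IntermediateField.adjoin K {θ})
      = (minpoly K θ).natDegree := IntermediateField.adjoin.finrank hθint
  rw [← hadj, mul_comm, ← hfinK]
  rw [htower, hfr]

lemma coeff_sum_C_mul_X_pow {K : Type*} [Semiring K] (c : ℕ → K) (p b : ℕ) (hb : b < p) :
    (∑ t ∈ Finset.range p, C (c t) * X ^ t).coeff b = c b := by
  rw [finset_sum_coeff]
  simp only [coeff_C_mul, coeff_X_pow, mul_ite, mul_one, mul_zero]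
  rw [Finset.sum_ite_eq (Finset.range p) b c]
  simp [hb]

lemma mann_vanish (p n : ℕ) (hp : p.Prime) (hn : 0 < n) (hpn : p ∣ n)
    (ζ : ℂ) (hζ : IsPrimitiveRoot ζ n) (c : ℕ → ℂ)
    (hcK : ∀ b, c b ∈ mannK p ζ)
    (hrel : ∑ b ∈ Finset.range p, c b * (ζ ^ (ordCompl[p] n)) ^ b = 0)
    (hzero : ¬ (p ^ 2 ∣ n) → ∃ b, b < p ∧ c b = 0) :
    ∀ b, b < p → c b = 0 := by
  have hp1 : 1 < p := hp.one_lt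
  obtain ⟨m, hmdef⟩ : ∃ m : ℕ, ordCompl[p] n = m := ⟨_, rfl⟩
  rw [hmdef] at hrel
  set θ : ℂ := ζ ^ m with hθdef
  set K : IntermediateField ℚ ℂ := mannK p ζ with hKdef
  have hnp : 0 < n / p := Nat.div_pos (Nat.le_of_dvd hn hpn) hp.pos
  have htnp : 0 < (n / p).totient := Nat.totient_pos.mpr hnp
  have hθint : IsIntegral K θ := by
    have h1 : IsIntegral ℚ ζ := (hζ.isIntegral hn).tower_top
    have h2 : IsIntegral ℚ θ := h1.pow m
    exact h2.tower_top
  set c' : ℕ → K := fun b => ⟨c b, hcK b⟩ with hc'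
  set q : Polynomial K := ∑ t ∈ Finset.range p, C (c' t) * X ^ t with hq
  have hqcoeff : ∀ b, b < p → q.coeff b = c' b := fun b hb =>
    coeff_sum_C_mul_X_pow c' p b hb
  have hcast : ∀ b, (c' b : ℂ) = c b := fun b => rfl
  have haq : aeval θ q = 0 := by
    rw [hq, map_sum]
    simp only [map_mul, map_pow, aeval_C, aeval_X]
    exact hrel
  have hdvd : minpoly K θ ∣ q := minpoly.dvd K θ haq
  have hdeg := mann_deg p n hp hn hpn ζ hζ
  rw [hmdef] at hdeg
  have hqdeg : q.degree < (p : ℕ) := by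
    rw [hq]
    apply lt_of_le_of_lt (Polynomial.degree_sum_le _ _)
    apply Finset.sup_lt_iff (by exact_mod_cast WithBot.bot_lt_coe (p:ℕ)) |>.mpr
    intro t ht
    apply lt_of_le_of_lt (degree_C_mul_X_pow_le _ _)
    exact_mod_cast WithBot.coe_lt_coe.mpr (Finset.mem_range.mp ht)
  by_cases hsq : p ^ 2 ∣ n
  · -- degree of minpoly is p
    have hpdvd : p ∣ n / p := (Nat.dvd_div_iff_mul_dvd hpn).mpr (by rwa [← pow_two])
    have htot : n.totient = p * (n / p).totient := by
      conv_lhs => rw [← Nat.mul_div_cancel' hpn]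
      exact Nat.totient_mul_of_prime_of_dvd hp hpdvd
    have hdegp : (minpoly K θ).natDegree = p := by
      have := hdeg.trans htot
      exact Nat.eq_of_mul_eq_mul_right htnp this
    have hq0 : q = 0 := by
      by_contra h0
      have h1 := Polynomial.natDegree_le_of_dvd hdvd h0
      rw [hdegp] at h1
      have h2 : q.natDegree < p := (Polynomial.natDegree_lt_iff_degree_lt h0).mpr hqdeg
      omega
    intro b hb
    have := hqcoeff b hb
    rw [hq0] at this
    have : c' b = 0 := by simpa using this.symm
    rw [← hcast b, this]; rfl
  · -- e = 1 case
    have hfac1 : n.factorization p = 1 := by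
      have h1 : 1 ≤ n.factorization p := hp.factorization_pos_of_dvd hn.ne' hpn
      have h2 : ¬ 2 ≤ n.factorization p := by
        intro h
        exact hsq ((Nat.Prime.pow_dvd_iff_le_factorization hp hn.ne').mpr h)
      omega
    have hmp : m * p = n := by
      have h5 := Nat.ordProj_mul_ordCompl_eq_self n p
      rw [hmdef, hfac1, pow_one] at h5
      rw [mul_comm]; exact h5
    have hθp : IsPrimitiveRoot θ p := hζ.pow hn hmp.symm
    -- minpoly degree is p - 1
    have hnpm : n / p = m := by
      rw [← hmp, Nat.mul_div_cancel _ hp.pos]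
    have hcop : Nat.Coprime m p := by
      rw [← hmdef]; exact (Nat.coprime_ordCompl hp hn.ne').symm
    have htot : n.totient = (p - 1) * (n / p).totient := by
      conv_lhs => rw [← hmp]
      rw [Nat.totient_mul hcop, Nat.totient_prime hp, hnpm, mul_comm]
    have hdegp : (minpoly K θ).natDegree = p - 1 :=
      Nat.eq_of_mul_eq_mul_right htnp (hdeg.trans htot)
    set Φ : Polynomial K := ∑ t ∈ Finset.range p, X ^ t with hΦ
    have hΦeq : Φ = ∑ t ∈ Finset.range p, C (1 : K) * X ^ t := by simp [hΦ]
    have hΦcoeff : ∀ b, b < p → Φ.coeff b = 1 := by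
      intro b hb
      rw [hΦeq]
      exact coeff_sum_C_mul_X_pow (fun _ => (1 : K)) p b hb
    have hΦdeg : Φ.degree < (p : ℕ) := by
      rw [hΦeq]
      apply lt_of_le_of_lt (Polynomial.degree_sum_le _ _)
      apply Finset.sup_lt_iff (by exact_mod_cast WithBot.bot_lt_coe (p:ℕ)) |>.mpr
      intro t ht
      apply lt_of_le_of_lt (degree_C_mul_X_pow_le _ _)
      exact_mod_cast WithBot.coe_lt_coe.mpr (Finset.mem_range.mp ht)
    have hΦθ : aeval θ Φ = 0 := by
      rw [hΦ, map_sum]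
      simp only [map_pow, aeval_X]
      exact hθp.geom_sum_eq_zero hp1
    set d : K := q.coeff (p - 1) with hd
    set r : Polynomial K := q - C d * Φ with hr
    have har : aeval θ r = 0 := by
      rw [hr, map_sub, map_mul, aeval_C, hΦθ, haq, mul_zero, sub_zero]
    have hrcoeff : ∀ t, p - 1 ≤ t → r.coeff t = 0 := by
      intro t ht
      rcases eq_or_lt_of_le ht with h | h
      · rw [hr, coeff_sub, coeff_C_mul, hΦcoeff _ (by omega), mul_one, ← h, ← hd,
          sub_self]
      · have hpt : (p : ℕ) ≤ t := by omega
        rw [hr, coeff_sub, coeff_C_mul,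
          coeff_eq_zero_of_degree_lt (lt_of_lt_of_le hqdeg (by exact_mod_cast hpt)),
          coeff_eq_zero_of_degree_lt (lt_of_lt_of_le hΦdeg (by exact_mod_cast hpt)),
          mul_zero, sub_self]
    have hr0 : r = 0 := by
      by_contra h0
      have h1 := Polynomial.natDegree_le_of_dvd (minpoly.dvd K θ har) h0
      rw [hdegp] at h1
      have h2 : r.degree < ((p - 1 : ℕ) : WithBot ℕ) :=
        (Polynomial.degree_lt_iff_coeff_zero _ _).mpr
          (fun t ht => hrcoeff t (by exact_mod_cast ht))
      have h3 : r.natDegree < p - 1 := (Polynomial.natDegree_lt_iff_degree_lt h0).mpr h2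
      omega
    have hqeq : q = C d * Φ := by
      have := sub_eq_zero.mp hr0
      exact this
    have hall : ∀ b, b < p → c' b = d := by
      intro b hb
      rw [← hqcoeff b hb, hqeq, coeff_C_mul, hΦcoeff b hb, mul_one]
    obtain ⟨b₀, hb₀, hcb₀⟩ := hzero hsq
    have hd0 : d = 0 := by
      rw [← hall b₀ hb₀]
      apply Subtype.ext
      exact hcb₀
    intro b hb
    rw [← hcast b, hall b hb, hd0]
    rfl

lemma mann_key (k p n : ℕ) (hp : p.Prime) (hn : 0 < n) (hpn : p ∣ n)
    (a : Fin k → ℚ) (ω : Fin k → ℂ)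
    (hω0 : ∀ x, ω x ≠ 0)
    (hsum : ∑ x : Fin k, (a x : ℂ) * ω x = 0)
    (hsub : ∀ I : Finset (Fin k), I.Nonempty → I ≠ Finset.univ →
      ∑ x ∈ I, (a x : ℂ) * ω x ≠ 0)
    (hord : ∀ x y : Fin k, (ω x / ω y) ^ n = 1)
    (hcase : p ^ 2 ∣ n ∨ k < p) :
    ∀ x y : Fin k, (ω x / ω y) ^ (n / p) = 1 := by
  intro i j
  haveI : NeZero p := ⟨hp.pos.ne'⟩
  have hp1 : 1 < p := hp.one_lt
  have hnp : 0 < n / p := Nat.div_pos (Nat.le_of_dvd hn hpn) hp.pos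
  haveI : NeZero (n / p) := ⟨hnp.ne'⟩
  have hnpp : (n / p) * p = n := Nat.div_mul_cancel hpn
  set ζ : ℂ := Complex.exp (2 * Real.pi * Complex.I / n) with hζdef
  have hζ : IsPrimitiveRoot ζ n := Complex.isPrimitiveRoot_exp n hn.ne'
  obtain ⟨m, hmdef⟩ : ∃ m : ℕ, ordCompl[p] n = m := ⟨_, rfl⟩
  obtain ⟨e, hedef⟩ : ∃ e : ℕ, n.factorization p = e := ⟨_, rfl⟩
  have hem : p ^ e * m = n := by
    rw [← hmdef, ← hedef]; exact Nat.ordProj_mul_ordCompl_eq_self n p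
  have he1 : 1 ≤ e := by
    rw [← hedef]; exact hp.factorization_pos_of_dvd hn.ne' hpn
  have hcopm : m.Coprime p := by
    rw [← hmdef]; exact (Nat.coprime_ordCompl hp hn.ne').symm
  set θ : ℂ := ζ ^ m with hθdef
  have hθ : IsPrimitiveRoot θ (p ^ e) := hζ.pow hn (by rw [← hem, mul_comm])
  have hθ0 : θ ≠ 0 := hθ.ne_zero (pow_pos hp.pos e).ne'
  set τ : ℂ := θ ^ (p ^ (e - 1)) with hτdef
  have hτ : IsPrimitiveRoot τ p := by
    refine hθ.pow (pow_pos hp.pos e) ?_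
    rw [← pow_succ]
    congr 1
    omega
  set σ : ℂ := τ ^ m with hσdef
  have hσ : IsPrimitiveRoot σ p := hτ.pow_of_coprime m hcopm
  have hσ0 : σ ≠ 0 := hσ.ne_zero hp.pos.ne'
  have hnpe : n / p = p ^ (e - 1) * m := by
    have h1 : n = p * (p ^ (e - 1) * m) := by
      rw [← hem, ← mul_assoc, ← pow_succ']
      congr 2
      omega
    rw [h1, Nat.mul_div_cancel_left _ hp.pos]
  have hθnp : θ ^ (n / p) = σ := by
    rw [hσdef, hτdef, hnpe, pow_mul]
  -- the ratios
  set ρ : Fin k → ℂ := fun x => ω x / ω j with hρdef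
  have hρn : ∀ x, ρ x ^ n = 1 := fun x => hord x j
  have hbex : ∀ x : Fin k, ∃ t, t < p ∧ σ ^ t = ρ x ^ (n / p) := by
    intro x
    apply hσ.eq_pow_of_pow_eq_one
    rw [← pow_mul, hnpp]
    exact hρn x
  choose b hb hbe using hbex
  set μ : Fin k → ℂ := fun x => ρ x / θ ^ b x with hμdef
  have hρ0 : ∀ x, ρ x ≠ 0 := fun x => div_ne_zero (hω0 x) (hω0 j)
  have hμ1 : ∀ x, μ x ^ (n / p) = 1 := by
    intro x
    show (ρ x / θ ^ b x) ^ (n / p) = 1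
    rw [div_pow, ← pow_mul, mul_comm (b x), pow_mul, hθnp, hbe x,
      div_self (pow_ne_zero _ (hρ0 x))]
  -- μ lands in K
  have hζp : IsPrimitiveRoot (ζ ^ p) (n / p) := hζ.pow hn (Nat.mul_div_cancel' hpn).symm
  have hμK : ∀ x, μ x ∈ mannK p ζ := by
    intro x
    apply mannK_mem
    obtain ⟨t, _, ht⟩ := hζp.eq_pow_of_pow_eq_one (hμ1 x)
    exact ⟨t, ht⟩
  -- the fiber sums
  set c : ℕ → ℂ := fun t => ∑ x ∈ Finset.univ.filter (fun x => b x = t), (a x : ℂ) * μ x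
    with hcdef
  have hcK : ∀ t, c t ∈ mannK p ζ := by
    intro t
    exact sum_mem fun x _ => mul_mem (SubfieldClass.ratCast_mem _ (a x)) (hμK x)
  have hsum' : ∑ x : Fin k, (a x : ℂ) * ρ x = 0 := by
    have h1 : ∑ x : Fin k, (a x : ℂ) * ρ x = (∑ x : Fin k, (a x : ℂ) * ω x) / ω j := by
      rw [Finset.sum_div]
      refine Finset.sum_congr rfl fun x _ => ?_
      show (a x : ℂ) * (ω x / ω j) = (a x : ℂ) * ω x / ω j
      exact (mul_div_assoc _ _ _).symm
    rw [h1, hsum, zero_div]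
  have hct : ∀ t, c t * θ ^ t
      = ∑ x ∈ Finset.univ.filter (fun x => b x = t), (a x : ℂ) * ρ x := by
    intro t
    rw [hcdef]
    simp only
    rw [Finset.sum_mul]
    apply Finset.sum_congr rfl
    intro x hx
    have hbx : b x = t := (Finset.mem_filter.mp hx).2
    rw [← hbx, mul_assoc]
    congr 1
    show μ x * θ ^ b x = ρ x
    rw [hμdef]
    simp only
    exact div_mul_cancel₀ _ (pow_ne_zero _ hθ0)
  have hrel : ∑ t ∈ Finset.range p, c t * θ ^ t = 0 := by
    rw [Finset.sum_congr rfl (fun t _ => hct t),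
      Finset.sum_fiberwise_of_maps_to (fun x _ => Finset.mem_range.mpr (hb x))
        (fun x => (a x : ℂ) * ρ x)]
    exact hsum'
  have hzero : ¬ (p ^ 2 ∣ n) → ∃ t, t < p ∧ c t = 0 := by
    intro hsq
    have hkp : k < p := hcase.resolve_left hsq
    obtain ⟨t, htr, htm⟩ : ∃ t ∈ Finset.range p, t ∉ Finset.univ.image b := by
      by_contra hcon
      push_neg at hcon
      have hsubset : Finset.range p ⊆ Finset.univ.image b := fun t ht => hcon t ht
      have hcard := Finset.card_le_card hsubset
      have h2 : (Finset.univ.image b).card ≤ k := by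
        apply le_trans Finset.card_image_le
        simp
      rw [Finset.card_range] at hcard
      omega
    refine ⟨t, Finset.mem_range.mp htr, ?_⟩
    have hemp : Finset.univ.filter (fun x => b x = t) = ∅ := by
      rw [Finset.filter_eq_empty_iff]
      intro x _
      exact fun hbx => htm (Finset.mem_image.mpr ⟨x, Finset.mem_univ x, hbx⟩)
    rw [hcdef]
    simp only
    rw [hemp, Finset.sum_empty]
  have hc0 : ∀ t, t < p → c t = 0 := by
    apply mann_vanish p n hp hn hpn ζ hζ c hcK _ hzero
    rw [hmdef]
    exact hrel
  -- all indices in one fiber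
  have hfib : Finset.univ.filter (fun x => b x = b i) = Finset.univ := by
    by_contra hne
    refine hsub (Finset.univ.filter (fun x => b x = b i))
      ⟨i, Finset.mem_filter.mpr ⟨Finset.mem_univ i, rfl⟩⟩ hne ?_
    have h1 : ∑ x ∈ Finset.univ.filter (fun x => b x = b i), (a x : ℂ) * ω x
        = ω j * ∑ x ∈ Finset.univ.filter (fun x => b x = b i), (a x : ℂ) * ρ x := by
      rw [Finset.mul_sum]
      refine Finset.sum_congr rfl fun x _ => ?_
      show (a x : ℂ) * ω x = ω j * ((a x : ℂ) * (ω x / ω j))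
      rw [← mul_div_assoc, mul_comm (ω j) ((a x : ℂ) * ω x / ω j),
        div_mul_cancel₀ _ (hω0 j)]
    rw [h1, ← hct (b i), hc0 (b i) (hb i), zero_mul, mul_zero]
  have hj : j ∈ Finset.univ.filter (fun x => b x = b i) := by
    rw [hfib]; exact Finset.mem_univ j
  have hbj : b j = b i := (Finset.mem_filter.mp hj).2
  have hρj : ρ j = 1 := div_self (hω0 j)
  show ρ i ^ (n / p) = 1
  calc ρ i ^ (n / p) = σ ^ b i := (hbe i).symm
    _ = σ ^ b j := by rw [hbj]
    _ = ρ j ^ (n / p) := hbe j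
    _ = 1 := by rw [hρj, one_pow]


theorem mann_theorem
    (k : ℕ) (a : Fin k → ℚ) (ω : Fin k → ℂ)
    (ha : ∀ i, a i ≠ 0)
    (hω : ∀ i, ∃ m : ℕ, 0 < m ∧ ω i ^ m = 1)
    (hsum : ∑ i : Fin k, (a i : ℂ) * ω i = 0)
    (hsub : ∀ I : Finset (Fin k), I.Nonempty → I ≠ Finset.univ →
      ∑ i ∈ I, (a i : ℂ) * ω i ≠ 0) :
    ∀ i j : Fin k,
      (ω i / ω j) ^ ((Finset.range (k + 1)).filter Nat.Prime).prod id = 1 := by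
  have hω0 : ∀ x, ω x ≠ 0 := by
    intro x
    obtain ⟨mm, hm0, hm1⟩ := hω x
    intro h0
    rw [h0, zero_pow hm0.ne'] at hm1
    exact zero_ne_one hm1
  set Θ : ℕ := ((Finset.range (k + 1)).filter Nat.Prime).prod id with hΘ
  suffices h : ∀ n : ℕ, 0 < n → (∀ x y : Fin k, (ω x / ω y) ^ n = 1) →
      ∀ x y : Fin k, (ω x / ω y) ^ Θ = 1 by
    have hfin : ∀ z : Fin k × Fin k, ∃ n : ℕ, 0 < n ∧ (ω z.1 / ω z.2) ^ n = 1 := by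
      rintro ⟨x, y⟩
      obtain ⟨mx, hmx, hx⟩ := hω x
      obtain ⟨my, hmy, hy⟩ := hω y
      refine ⟨mx * my, Nat.mul_pos hmx hmy, ?_⟩
      rw [div_pow, pow_mul, hx, one_pow, mul_comm, pow_mul, hy, one_pow, div_one]
    choose f hf0 hf1 using hfin
    set N : ℕ := ∏ z : Fin k × Fin k, f z with hN
    have hNpos : 0 < N := Finset.prod_pos fun z _ => hf0 z
    refine h N hNpos ?_
    intro x y
    obtain ⟨d, hd⟩ : f (x, y) ∣ N := Finset.dvd_prod_of_mem f (Finset.mem_univ (x, y))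
    rw [hd, pow_mul, hf1 (x, y), one_pow]
  intro n
  induction n using Nat.strong_induction_on with
  | _ n ih =>
    intro hn hord
    by_cases hdvd : n ∣ Θ
    · intro x y
      obtain ⟨d, hd⟩ := hdvd
      rw [hd, pow_mul, hord x y, one_pow]
    · have hbad : ∃ p : ℕ, p.Prime ∧ p ∣ n ∧ (p ^ 2 ∣ n ∨ k < p) := by
        by_cases hsf : Squarefree n
        · have hex : ∃ q ∈ n.primeFactors, k < q := by
            by_contra hcon
            push_neg at hcon
            apply hdvd
            have h1 : n.primeFactors ⊆ (Finset.range (k + 1)).filter Nat.Prime := by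
              intro q hq
              rw [Finset.mem_filter, Finset.mem_range]
              exact ⟨Nat.lt_succ_of_le (hcon q hq), Nat.prime_of_mem_primeFactors hq⟩
            have h2 : ∏ q ∈ n.primeFactors, q ∣ Θ := by
              rw [hΘ]
              exact Finset.prod_dvd_prod_of_subset _ _ id h1
            rwa [Nat.prod_primeFactors_of_squarefree hsf] at h2
          obtain ⟨q, hq, hkq⟩ := hex
          exact ⟨q, Nat.prime_of_mem_primeFactors hq,
            Nat.dvd_of_mem_primeFactors hq, Or.inr hkq⟩
        · rw [Nat.squarefree_iff_prime_squarefree] at hsf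
          push_neg at hsf
          obtain ⟨p, hp, hpp⟩ := hsf
          exact ⟨p, hp, dvd_trans (Dvd.intro p rfl) hpp,
            Or.inl (by rwa [pow_two])⟩
      obtain ⟨p, hp, hpn, hc⟩ := hbad
      have hkey := mann_key k p n hp hn hpn a ω hω0 hsum hsub hord hc
      exact ih (n / p) (Nat.div_lt_self hn hp.one_lt)
        (Nat.div_pos (Nat.le_of_dvd hn hpn) hp.pos) hkey
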